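/- Characteristic determinant asymptotics (Lemma 1.1). Fix an even integer n = 2q with q ≥ 1 and boundary data (σ_ν, a_ν, b_ν). There exists a constant C > 0 (depending only on n and the boundary data) such that for every r ≥ 1 and every ρ = r e^{iφ} with 0 ≤ φ ≤ 2π/n: |det η(ρ) − Θ| ≤ C·( exp(−Im ρ) + exp(−Im(ε_{q−1} ρ)) ). Consequently, if Θ ≠ 0 and |det η(ρ)| ≥ c > 0, then |(det η(ρ))^{−1} − Θ^{−1}| ≤ (C/(c·|Θ|))·( exp(−Im ρ) + exp(−Im(ε_{q−1} ρ)) ). -/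

import Mathlib

noncomputable section

open MeasureTheory Filter Topology

namespace Equi

/-- `ε_k = exp(2πik/n)`. -/
def eps (n : ℕ) (k : ℤ) : ℂ := Complex.exp (2 * Real.pi * Complex.I * k / n)

/-- `y_k(x,ρ) = exp(iρ ε_k x)`. -/
def yf (n : ℕ) (k : ℤ) (x : ℝ) (ρ : ℂ) : ℂ := Complex.exp (Complex.I * ρ * eps n k * x)

/-- The fundamental system `z_k`. -/
def zf (n q : ℕ) (k : Fin n) (x : ℝ) (ρ : ℂ) : ℂ :=
  if (k : ℕ) < q then yf n ((k : ℕ) : ℤ) x ρ else yf n ((k : ℕ) : ℤ) (x - 1) ρ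

/-- Boundary data: orders `σ_ν` and coefficients `a_ν`, `b_ν`. -/
structure BD (n : ℕ) where
  ord : Fin n → Fin n
  a : Fin n → ℂ
  b : Fin n → ℂ

/-- The matrix `η(ρ)`, with entries `η_{νk} = ε_k^{σ_ν}(b_ν z_k(1,ρ) + a_ν z_k(0,ρ))`. -/
def etaM (n q : ℕ) (L : BD n) (ρ : ℂ) : Matrix (Fin n) (Fin n) ℂ :=
  Matrix.of fun ν k => eps n ((k : ℕ) : ℤ) ^ ((L.ord ν : ℕ)) *
    (L.b ν * zf n q k 1 ρ + L.a ν * zf n q k 0 ρ)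

/-- The matrix whose determinant is the regularity determinant `Θ`. -/
def ThetaM (n q : ℕ) (L : BD n) : Matrix (Fin n) (Fin n) ℂ :=
  Matrix.of fun ν j => (if (j : ℕ) < q then L.a ν else L.b ν) * eps n ((j : ℕ) : ℤ) ^ ((L.ord ν : ℕ))

/-- The regularity determinant `Θ`. -/
def Theta (n q : ℕ) (L : BD n) : ℂ := (ThetaM n q L).det

/-- The point `ρ = r e^{iφ}` on the arc `Γ_r`. -/
def arcPt (r φ : ℝ) : ℂ := (r : ℂ) * Complex.exp (Complex.I * φ)

/-! ### Auxiliary lemmas -/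

lemma sin_min_le' {a b θ : ℝ} (ha : 0 ≤ a) (h1 : a ≤ θ) (h2 : θ ≤ b) (hb : b ≤ Real.pi) :
    min (Real.sin a) (Real.sin b) ≤ Real.sin θ := by
  rcases le_or_gt θ (Real.pi/2) with h | h
  · refine le_trans (min_le_left _ _) ?_
    exact Real.sin_le_sin_of_le_of_le_pi_div_two (by linarith [Real.pi_pos]) h h1
  · refine le_trans (min_le_right _ _) ?_
    rw [← Real.sin_pi_sub b, ← Real.sin_pi_sub θ]
    exact Real.sin_le_sin_of_le_of_le_pi_div_two (by linarith) (by linarith) (by linarith)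

lemma prod_sub_prod_norm {ι : Type*} [DecidableEq ι] (s : Finset ι) (u v : ι → ℂ) (M d : ℝ)
    (hM : 1 ≤ M) (hd : 0 ≤ d)
    (hu : ∀ i ∈ s, ‖u i‖ ≤ M) (hv : ∀ i ∈ s, ‖v i‖ ≤ M)
    (huv : ∀ i ∈ s, ‖u i - v i‖ ≤ d) :
    ‖∏ i ∈ s, u i - ∏ i ∈ s, v i‖ ≤ s.card * M ^ s.card * d := by
  induction s using Finset.induction with
  | empty => simp
  | @insert a s has ih =>
    have hM0 : (0:ℝ) ≤ M := le_trans zero_le_one hM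
    have hus : ‖∏ i ∈ s, u i‖ ≤ M ^ s.card := by
      rw [norm_prod]
      calc ∏ i ∈ s, ‖u i‖ ≤ ∏ i ∈ s, M :=
        Finset.prod_le_prod (fun i _ => norm_nonneg _) (fun i hi => hu i (Finset.mem_insert_of_mem hi))
      _ = M ^ s.card := by rw [Finset.prod_const]
    have ihs := ih (fun i hi => hu i (Finset.mem_insert_of_mem hi))
      (fun i hi => hv i (Finset.mem_insert_of_mem hi))
      (fun i hi => huv i (Finset.mem_insert_of_mem hi))
    rw [Finset.prod_insert has, Finset.prod_insert has, Finset.card_insert_of_notMem has]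
    have key : u a * ∏ i ∈ s, u i - v a * ∏ i ∈ s, v i
        = (u a - v a) * ∏ i ∈ s, u i + v a * (∏ i ∈ s, u i - ∏ i ∈ s, v i) := by ring
    rw [key]
    calc ‖(u a - v a) * ∏ i ∈ s, u i + v a * (∏ i ∈ s, u i - ∏ i ∈ s, v i)‖
        ≤ ‖(u a - v a) * ∏ i ∈ s, u i‖ + ‖v a * (∏ i ∈ s, u i - ∏ i ∈ s, v i)‖ := norm_add_le _ _
      _ = ‖u a - v a‖ * ‖∏ i ∈ s, u i‖ + ‖v a‖ * ‖∏ i ∈ s, u i - ∏ i ∈ s, v i‖ := by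
          rw [norm_mul, norm_mul]
      _ ≤ d * M ^ s.card + M * (s.card * M ^ s.card * d) := by
          refine add_le_add (mul_le_mul (huv a (Finset.mem_insert_self a s)) hus (norm_nonneg _) hd)
            (mul_le_mul (hv a (Finset.mem_insert_self a s)) ihs (norm_nonneg _) hM0)
      _ ≤ ((s.card : ℝ) + 1) * M ^ (s.card + 1) * d := by
          have h1 : (1:ℝ) ≤ M ^ s.card := one_le_pow₀ hM
          have hc : (0:ℝ) ≤ (s.card : ℝ) := Nat.cast_nonneg _
          rw [pow_succ]
          nlinarith [pow_nonneg hM0 s.card, mul_nonneg hd (pow_nonneg hM0 s.card)]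
      _ = ((s.card + 1 : ℕ) : ℝ) * M ^ (s.card + 1) * d := by push_cast; ring

lemma norm_exp_I_mul' (w : ℂ) : ‖Complex.exp (Complex.I * w)‖ = Real.exp (-w.im) := by
  rw [Complex.norm_exp]
  congr 1
  simp [Complex.mul_re]

lemma norm_exp_neg_I_mul (w : ℂ) : ‖Complex.exp (-(Complex.I * w))‖ = Real.exp w.im := by
  rw [Complex.norm_exp]
  congr 1
  simp [Complex.mul_re]

lemma norm_eps' (n : ℕ) (k : ℤ) : ‖eps n k‖ = 1 := by
  have h : 2 * (Real.pi:ℂ) * Complex.I * k / n = ((2 * Real.pi * k / n : ℝ) : ℂ) * Complex.I := by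
    push_cast; ring
  rw [eps, h, Complex.norm_exp_ofReal_mul_I]

lemma im_eps_mul (n : ℕ) (k : ℤ) (r φ : ℝ) :
    (eps n k * arcPt r φ).im = r * Real.sin (φ + 2 * Real.pi * k / n) := by
  have h : 2 * (Real.pi:ℂ) * Complex.I * k / n + Complex.I * φ
      = ((φ + 2 * Real.pi * k / n : ℝ) : ℂ) * Complex.I := by push_cast; ring
  rw [show eps n k * arcPt r φ
      = (r:ℂ) * Complex.exp (((φ + 2 * Real.pi * k / n : ℝ) : ℂ) * Complex.I) by
    rw [eps, arcPt, ← h, Complex.exp_add]; ring]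
  rw [Complex.mul_im, Complex.exp_ofReal_mul_I_im]
  simp

/-- **Lemma 1.1 (characteristic determinant asymptotics).** There is `C > 0` such that
`|det η(ρ) − Θ| ≤ C(e^{−Im ρ} + e^{−Im(ε_{q−1}ρ)})` on the arcs `Γ_r`, `r ≥ 1`; consequently,
where `Θ ≠ 0` and `|det η(ρ)| ≥ c > 0`, also
`|(det η(ρ))⁻¹ − Θ⁻¹| ≤ (C/(c|Θ|))(e^{−Im ρ} + e^{−Im(ε_{q−1}ρ)})`. -/
theorem characteristic_determinant_asymptotics
    (n q : ℕ) (hn : n = 2 * q) (hq : 1 ≤ q) (L : BD n) :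
    ∃ C : ℝ, 0 < C ∧
      (∀ r : ℝ, 1 ≤ r → ∀ φ ∈ Set.Icc (0:ℝ) (2 * Real.pi / n),
        ‖(etaM n q L (arcPt r φ)).det - Theta n q L‖ ≤
          C * (Real.exp (-(arcPt r φ).im) +
               Real.exp (-(eps n ((q : ℤ) - 1) * arcPt r φ).im))) ∧
      (Theta n q L ≠ 0 → ∀ c : ℝ, 0 < c → ∀ r : ℝ, 1 ≤ r →
        ∀ φ ∈ Set.Icc (0:ℝ) (2 * Real.pi / n),
          c ≤ ‖(etaM n q L (arcPt r φ)).det‖ →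
          ‖((etaM n q L (arcPt r φ)).det)⁻¹ - (Theta n q L)⁻¹‖ ≤
            C / (c * ‖Theta n q L‖) *
              (Real.exp (-(arcPt r φ).im) +
               Real.exp (-(eps n ((q : ℤ) - 1) * arcPt r φ).im))) := by
  classical
  subst hn
  have hπ := Real.pi_pos
  have hq' : (1:ℝ) ≤ (q:ℝ) := by exact_mod_cast hq
  have hq0 : (0:ℝ) < (q:ℝ) := by linarith
  set K : ℝ := (∑ ν : Fin (2*q), (‖L.a ν‖ + ‖L.b ν‖)) + 1 with hKdef
  have hK1 : 1 ≤ K := by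
    have h0 : 0 ≤ ∑ ν : Fin (2*q), (‖L.a ν‖ + ‖L.b ν‖) :=
      Finset.sum_nonneg (fun i _ => by positivity)
    rw [hKdef]; linarith
  have hK0 : (0:ℝ) ≤ K := le_trans zero_le_one hK1
  have hKpos : (0:ℝ) < K := lt_of_lt_of_le one_pos hK1
  have hab : ∀ ν : Fin (2*q), ‖L.a ν‖ + ‖L.b ν‖ ≤ K := by
    intro ν
    have := Finset.single_le_sum (f := fun ν : Fin (2*q) => ‖L.a ν‖ + ‖L.b ν‖)
      (fun i _ => by positivity) (Finset.mem_univ ν)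
    rw [hKdef]; linarith
  set C : ℝ := ((2*q).factorial : ℝ) * ((2*q : ℕ) : ℝ) * K ^ (2*q+1) with hCdef
  have hCpos : 0 < C := by
    rw [hCdef]
    have h1 : (0:ℝ) < ((2*q).factorial : ℝ) := by exact_mod_cast (2*q).factorial_pos
    have h2 : (0:ℝ) < ((2*q : ℕ) : ℝ) := by positivity
    positivity
  -- Main estimate
  have hmain : ∀ r : ℝ, 1 ≤ r → ∀ φ ∈ Set.Icc (0:ℝ) (2 * Real.pi / ((2*q : ℕ) : ℝ)),
      ‖(etaM (2*q) q L (arcPt r φ)).det - Theta (2*q) q L‖ ≤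
        C * (Real.exp (-(arcPt r φ).im) +
             Real.exp (-(eps (2*q) ((q : ℤ) - 1) * arcPt r φ).im)) := by
    intro r hr φ hφ
    obtain ⟨hφ0, hφ2⟩ := hφ
    have hr0 : (0:ℝ) ≤ r := le_trans zero_le_one hr
    have hcast2q : ((2*q : ℕ) : ℝ) = 2*(q:ℝ) := by push_cast; ring
    have hφle : φ ≤ Real.pi / (q:ℝ) := by
      rw [hcast2q] at hφ2
      have : 2 * Real.pi / (2*(q:ℝ)) = Real.pi / (q:ℝ) := by
        field_simp
      linarith [this ▸ hφ2]
    have hφπ : φ ≤ Real.pi := le_trans hφle (div_le_self hπ.le hq')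
    -- angle/sin notation
    set sφ : ℕ → ℝ := fun k => Real.sin (φ + 2*Real.pi*(k:ℝ)/(2*(q:ℝ))) with hsφ
    have him' : ∀ k : ℕ, (eps (2*q) ((k : ℕ) : ℤ) * arcPt r φ).im = r * sφ k := by
      intro k
      have h := im_eps_mul (2*q) (k:ℤ) r φ
      rw [show φ + 2*Real.pi*(((k:ℕ):ℤ):ℝ)/((2*q:ℕ):ℝ) = φ + 2*Real.pi*(k:ℝ)/(2*(q:ℝ)) by
        push_cast; ring] at h
      exact h
    set sb : ℝ := Real.sin (φ + 2*Real.pi*((q:ℝ)-1)/(2*(q:ℝ))) with hsb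
    have hbim : (eps (2*q) ((q:ℤ)-1) * arcPt r φ).im = r * sb := by
      have h := im_eps_mul (2*q) ((q:ℤ)-1) r φ
      rw [show φ + 2*Real.pi*((((q:ℤ)-1):ℤ):ℝ)/((2*q:ℕ):ℝ)
          = φ + 2*Real.pi*((q:ℝ)-1)/(2*(q:ℝ)) by push_cast; ring] at h
      exact h
    have hρim : (arcPt r φ).im = r * Real.sin φ := by
      rw [arcPt, show Complex.I * (φ:ℂ) = ((φ:ℝ):ℂ) * Complex.I by ring,
        Complex.mul_im, Complex.exp_ofReal_mul_I_im]
      simp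
    set minv : ℝ := min (Real.sin φ) sb with hminv
    have hbleπ : φ + 2*Real.pi*((q:ℝ)-1)/(2*(q:ℝ)) ≤ Real.pi := by
      have he : 2*Real.pi*((q:ℝ)-1)/(2*(q:ℝ)) = Real.pi - Real.pi/(q:ℝ) := by
        field_simp
      rw [he]; linarith
    have hb0 : 0 ≤ φ + 2*Real.pi*((q:ℝ)-1)/(2*(q:ℝ)) := by
      have : 0 ≤ 2*Real.pi*((q:ℝ)-1)/(2*(q:ℝ)) := by
        exact div_nonneg (by nlinarith) (by linarith)
      linarith
    have hmin0 : 0 ≤ minv :=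
      le_min (Real.sin_nonneg_of_nonneg_of_le_pi hφ0 hφπ)
        (Real.sin_nonneg_of_nonneg_of_le_pi hb0 hbleπ)
    have hminle : ∀ k : ℕ, k < q → minv ≤ sφ k := by
      intro k hk
      refine sin_min_le' hφ0 ?_ ?_ hbleπ
      · have : 0 ≤ 2*Real.pi*(k:ℝ)/(2*(q:ℝ)) := by positivity
        linarith
      · have hkle : (k:ℝ) ≤ (q:ℝ) - 1 := by
          have : (k:ℝ) + 1 ≤ (q:ℝ) := by exact_mod_cast hk
          linarith
        have : 2*Real.pi*(k:ℝ)/(2*(q:ℝ)) ≤ 2*Real.pi*((q:ℝ)-1)/(2*(q:ℝ)) := by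
          gcongr
        linarith
    have hsin_neg : ∀ k : ℕ, q ≤ k → sφ k = - sφ (k - q) := by
      intro k hkq
      have hcast : ((k - q : ℕ) : ℝ) = (k:ℝ) - (q:ℝ) := by
        rw [Nat.cast_sub hkq]
      rw [hsφ]
      simp only
      rw [show φ + 2*Real.pi*(k:ℝ)/(2*(q:ℝ))
          = (φ + 2*Real.pi*(((k - q:ℕ)):ℝ)/(2*(q:ℝ))) + Real.pi by
        rw [hcast]; field_simp; ring]
      rw [Real.sin_add_pi]
    -- exponential bounds
    have hexp_le : ∀ k : ℕ, k < q → Real.exp (-(r * sφ k)) ≤ Real.exp (-(r * minv)) := by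
      intro k hk
      apply Real.exp_le_exp.mpr
      have := mul_le_mul_of_nonneg_left (hminle k hk) hr0
      linarith
    have hexp_le1 : ∀ k : ℕ, k < q → Real.exp (-(r * sφ k)) ≤ 1 := by
      intro k hk
      rw [Real.exp_le_one_iff]
      have h1 : 0 ≤ r * sφ k := mul_nonneg hr0 (le_trans hmin0 (hminle k hk))
      linarith
    -- entry bounds
    have hηbd : ∀ ν k, ‖etaM (2*q) q L (arcPt r φ) ν k‖ ≤ K := by
      intro ν k
      simp only [etaM, Matrix.of_apply]
      rw [norm_mul, norm_pow, norm_eps', one_pow, one_mul]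
      refine le_trans (norm_add_le _ _) (le_trans ?_ (hab ν))
      rw [norm_mul, norm_mul]
      by_cases hkq : (k:ℕ) < q
      · simp only [zf, if_pos hkq, yf]
        have hz1 : ‖Complex.exp (Complex.I * arcPt r φ * eps (2*q) ((k:ℕ):ℤ) * ((1:ℝ):ℂ))‖ ≤ 1 := by
          rw [show Complex.I * arcPt r φ * eps (2*q) ((k:ℕ):ℤ) * ((1:ℝ):ℂ)
              = Complex.I * (eps (2*q) ((k:ℕ):ℤ) * arcPt r φ) by push_cast; ring,
            norm_exp_I_mul', him']
          exact hexp_le1 k hkq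
        have hz0 : ‖Complex.exp (Complex.I * arcPt r φ * eps (2*q) ((k:ℕ):ℤ) * ((0:ℝ):ℂ))‖ = 1 := by
          rw [show Complex.I * arcPt r φ * eps (2*q) ((k:ℕ):ℤ) * ((0:ℝ):ℂ) = 0 by push_cast; ring,
            Complex.exp_zero, norm_one]
        calc ‖L.b ν‖ * ‖Complex.exp (Complex.I * arcPt r φ * eps (2*q) ((k:ℕ):ℤ) * ((1:ℝ):ℂ))‖
              + ‖L.a ν‖ * ‖Complex.exp (Complex.I * arcPt r φ * eps (2*q) ((k:ℕ):ℤ) * ((0:ℝ):ℂ))‖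
            ≤ ‖L.b ν‖ * 1 + ‖L.a ν‖ * 1 := by
              refine add_le_add (mul_le_mul_of_nonneg_left hz1 (norm_nonneg _))
                (mul_le_mul_of_nonneg_left (le_of_eq hz0) (norm_nonneg _))
          _ = ‖L.a ν‖ + ‖L.b ν‖ := by ring
      · simp only [zf, if_neg hkq, yf]
        push_neg at hkq
        have hkq2 : k - q < q := by omega
        have hz1 : ‖Complex.exp (Complex.I * arcPt r φ * eps (2*q) ((k:ℕ):ℤ) * (((1:ℝ)-1:ℝ):ℂ))‖ = 1 := by
          rw [show Complex.I * arcPt r φ * eps (2*q) ((k:ℕ):ℤ) * (((1:ℝ)-1:ℝ):ℂ) = 0 by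
            push_cast; ring, Complex.exp_zero, norm_one]
        have hz0 : ‖Complex.exp (Complex.I * arcPt r φ * eps (2*q) ((k:ℕ):ℤ) * (((0:ℝ)-1:ℝ):ℂ))‖ ≤ 1 := by
          rw [show Complex.I * arcPt r φ * eps (2*q) ((k:ℕ):ℤ) * (((0:ℝ)-1:ℝ):ℂ)
              = -(Complex.I * (eps (2*q) ((k:ℕ):ℤ) * arcPt r φ)) by push_cast; ring,
            norm_exp_neg_I_mul, him']
          rw [show r * sφ (k:ℕ) = -(r * sφ ((k:ℕ) - q)) by rw [hsin_neg (k:ℕ) hkq]; ring]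
          exact hexp_le1 _ hkq2
        calc ‖L.b ν‖ * ‖Complex.exp (Complex.I * arcPt r φ * eps (2*q) ((k:ℕ):ℤ) * (((1:ℝ)-1:ℝ):ℂ))‖
              + ‖L.a ν‖ * ‖Complex.exp (Complex.I * arcPt r φ * eps (2*q) ((k:ℕ):ℤ) * (((0:ℝ)-1:ℝ):ℂ))‖
            ≤ ‖L.b ν‖ * 1 + ‖L.a ν‖ * 1 := by
              refine add_le_add (mul_le_mul_of_nonneg_left (le_of_eq hz1) (norm_nonneg _))
                (mul_le_mul_of_nonneg_left hz0 (norm_nonneg _))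
          _ = ‖L.a ν‖ + ‖L.b ν‖ := by ring
    have hΘbd : ∀ ν k, ‖ThetaM (2*q) q L ν k‖ ≤ K := by
      intro ν k
      simp only [ThetaM, Matrix.of_apply]
      rw [norm_mul, norm_pow, norm_eps', one_pow, mul_one]
      by_cases hkq : (k:ℕ) < q
      · rw [if_pos hkq]
        have := hab ν
        have := norm_nonneg (L.b ν)
        linarith
      · rw [if_neg hkq]
        have := hab ν
        have := norm_nonneg (L.a ν)
        linarith
    have hdiffE : ∀ ν k, ‖etaM (2*q) q L (arcPt r φ) ν k - ThetaM (2*q) q L ν k‖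
        ≤ K * Real.exp (-(r * minv)) := by
      intro ν k
      by_cases hkq : (k:ℕ) < q
      · have heq : etaM (2*q) q L (arcPt r φ) ν k - ThetaM (2*q) q L ν k
            = eps (2*q) ((k:ℕ):ℤ) ^ ((L.ord ν : ℕ)) * L.b ν *
              Complex.exp (Complex.I * (eps (2*q) ((k:ℕ):ℤ) * arcPt r φ)) := by
          simp only [etaM, ThetaM, Matrix.of_apply, zf, if_pos hkq, yf, if_pos hkq]
          rw [show Complex.I * arcPt r φ * eps (2*q) ((k:ℕ):ℤ) * ((0:ℝ):ℂ) = 0 by push_cast; ring,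
            Complex.exp_zero,
            show Complex.I * arcPt r φ * eps (2*q) ((k:ℕ):ℤ) * ((1:ℝ):ℂ)
              = Complex.I * (eps (2*q) ((k:ℕ):ℤ) * arcPt r φ) by push_cast; ring]
          ring
        rw [heq, norm_mul, norm_mul, norm_pow, norm_eps', one_pow, one_mul,
          norm_exp_I_mul', him']
        exact mul_le_mul (le_trans (by linarith [norm_nonneg (L.a ν)]) (hab ν))
          (hexp_le k hkq) (Real.exp_pos _).le hK0
      · push_neg at hkq
        have hkq2 : (k:ℕ) - q < q := by omega
        have heq : etaM (2*q) q L (arcPt r φ) ν k - ThetaM (2*q) q L ν k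
            = eps (2*q) ((k:ℕ):ℤ) ^ ((L.ord ν : ℕ)) * L.a ν *
              Complex.exp (-(Complex.I * (eps (2*q) ((k:ℕ):ℤ) * arcPt r φ))) := by
          simp only [etaM, ThetaM, Matrix.of_apply, zf, if_neg (not_lt.mpr hkq), yf]
          rw [show Complex.I * arcPt r φ * eps (2*q) ((k:ℕ):ℤ) * (((1:ℝ)-1:ℝ):ℂ) = 0 by
            push_cast; ring, Complex.exp_zero,
            show Complex.I * arcPt r φ * eps (2*q) ((k:ℕ):ℤ) * (((0:ℝ)-1:ℝ):ℂ)
              = -(Complex.I * (eps (2*q) ((k:ℕ):ℤ) * arcPt r φ)) by push_cast; ring]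
          ring
        rw [heq, norm_mul, norm_mul, norm_pow, norm_eps', one_pow, one_mul,
          norm_exp_neg_I_mul, him']
        rw [show r * sφ (k:ℕ) = -(r * sφ ((k:ℕ) - q)) by rw [hsin_neg (k:ℕ) hkq]; ring]
        exact mul_le_mul (le_trans (by linarith [norm_nonneg (L.b ν)]) (hab ν))
          (hexp_le _ hkq2) (Real.exp_pos _).le hK0
    -- determinant bound
    have hdexp0 : (0:ℝ) ≤ K * Real.exp (-(r * minv)) :=
      mul_nonneg hK0 (Real.exp_pos _).le
    have hdet : ‖(etaM (2*q) q L (arcPt r φ)).det - (ThetaM (2*q) q L).det‖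
        ≤ ((2*q).factorial : ℝ) * (((2*q:ℕ):ℝ) * K ^ (2*q) * (K * Real.exp (-(r * minv)))) := by
      rw [Matrix.det_apply, Matrix.det_apply, ← Finset.sum_sub_distrib]
      refine le_trans (norm_sum_le _ _) ?_
      have hbd : ∀ σ : Equiv.Perm (Fin (2*q)),
          ‖Equiv.Perm.sign σ • ∏ i, etaM (2*q) q L (arcPt r φ) (σ i) i
            - Equiv.Perm.sign σ • ∏ i, ThetaM (2*q) q L (σ i) i‖
          ≤ ((2*q:ℕ):ℝ) * K ^ (2*q) * (K * Real.exp (-(r * minv))) := by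
        intro σ
        rw [← smul_sub]
        have hnorm : ‖Equiv.Perm.sign σ • (∏ i, etaM (2*q) q L (arcPt r φ) (σ i) i
            - ∏ i, ThetaM (2*q) q L (σ i) i)‖
            = ‖∏ i, etaM (2*q) q L (arcPt r φ) (σ i) i - ∏ i, ThetaM (2*q) q L (σ i) i‖ := by
          rcases Int.units_eq_one_or (Equiv.Perm.sign σ) with h | h <;> rw [h] <;>
            simp <;> exact norm_sub_rev _ _
        rw [hnorm]
        have h := prod_sub_prod_norm (Finset.univ : Finset (Fin (2*q)))
          (fun i => etaM (2*q) q L (arcPt r φ) (σ i) i) (fun i => ThetaM (2*q) q L (σ i) i)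
          K (K * Real.exp (-(r * minv))) hK1 hdexp0
          (fun i _ => hηbd (σ i) i) (fun i _ => hΘbd (σ i) i) (fun i _ => hdiffE (σ i) i)
        simpa using h
      refine le_trans (Finset.sum_le_card_nsmul _ _ _ (fun σ _ => hbd σ)) ?_
      rw [Finset.card_univ, Fintype.card_perm, Fintype.card_fin, nsmul_eq_mul]
    -- conclude
    have hEmin : Real.exp (-(r * minv)) ≤ Real.exp (-(r * Real.sin φ)) + Real.exp (-(r * sb)) := by
      rcases le_total (Real.sin φ) sb with h | h
      · rw [hminv, min_eq_left h]
        linarith [(Real.exp_pos (-(r * sb))).le]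
      · rw [hminv, min_eq_right h]
        linarith [(Real.exp_pos (-(r * Real.sin φ))).le]
    have hEeq : Real.exp (-(arcPt r φ).im) + Real.exp (-(eps (2*q) ((q:ℤ)-1) * arcPt r φ).im)
        = Real.exp (-(r * Real.sin φ)) + Real.exp (-(r * sb)) := by
      rw [hρim, hbim]
    rw [Theta, hEeq]
    calc ‖(etaM (2*q) q L (arcPt r φ)).det - (ThetaM (2*q) q L).det‖
        ≤ ((2*q).factorial : ℝ) * (((2*q:ℕ):ℝ) * K ^ (2*q) * (K * Real.exp (-(r * minv)))) := hdet
      _ = C * Real.exp (-(r * minv)) := by rw [hCdef, pow_succ]; ring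
      _ ≤ C * (Real.exp (-(r * Real.sin φ)) + Real.exp (-(r * sb))) :=
          mul_le_mul_of_nonneg_left hEmin hCpos.le
  refine ⟨C, hCpos, hmain, ?_⟩
  intro hΘ c hc r hr φ hφ hcle
  have h1 := hmain r hr φ hφ
  set A : ℂ := (etaM (2*q) q L (arcPt r φ)).det with hAdef
  set B : ℂ := Theta (2*q) q L with hBdef
  set E : ℝ := Real.exp (-(arcPt r φ).im) + Real.exp (-(eps (2*q) ((q:ℤ)-1) * arcPt r φ).im)
    with hEdef
  have hA0 : A ≠ 0 := by
    intro h
    rw [h, norm_zero] at hcle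
    linarith
  have hΘn : 0 < ‖B‖ := norm_pos_iff.mpr hΘ
  have hE0 : (0:ℝ) ≤ E := by
    rw [hEdef]
    positivity
  rw [inv_sub_inv hA0 hΘ, norm_div, norm_mul, norm_sub_rev]
  have h2 : ‖A - B‖ / (‖A‖ * ‖B‖) ≤ (C * E) / (c * ‖B‖) :=
    div_le_div₀ (mul_nonneg hCpos.le hE0) h1 (mul_pos hc hΘn)
      (mul_le_mul_of_nonneg_right hcle hΘn.le)
  rw [show C / (c * ‖B‖) * E = (C * E) / (c * ‖B‖) from div_mul_eq_mul_div _ _ _]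
  exact h2

end Equi
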